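/- arXiv:1101.4388 — 2 statements merged into one kernel-verified Lean document; each statement's English description precedes it below -/
import Mathlib

section
/- Let X be a set and K : X × X → ℂ a bounded function satisfying condition (A1). Then the following are equivalent: (i) K satisfies condition (A4); (ii) for every n, all pairwise distinct x₁, …, xₙ ∈ X, every continuous V : ℂⁿ → [0,∞), every continuous nondecreasing φ : [0,∞) → [0,∞) with lim_{t→∞} φ(t) = ∞, and every μ > 0, there exists c₀ ∈ ℓ¹(X) with support contained in {x₁, …, xₙ} such that V(Φ(c₀)(x₁), …, Φ(c₀)(xₙ)) + μ φ(‖c₀‖_{ℓ¹(X)}) ≤ V(Φ(c)(x₁), …, Φ(c)(xₙ)) + μ φ(‖c‖_{ℓ¹(X)}) for every c ∈ ℓ¹(X). -/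
open Matrix Filter Topology

/-- The kernel matrix `K[x]`, with `(j,k)` entry `K(x_k, x_j)`. -/
noncomputable def kernelMatrix {X : Type*} (K : X → X → ℂ) {n : ℕ} (x : Fin n → X) :
    Matrix (Fin n) (Fin n) ℂ := Matrix.of fun j k => K (x k) (x j)

/-- The vector `K_x(t)`, with `j`-th entry `K(t, x_j)`. -/
noncomputable def kernelVec {X : Type*} (K : X → X → ℂ) {n : ℕ} (x : Fin n → X) (t : X) :
    Fin n → ℂ := fun j => K t (x j)

/-- The `ℓ¹` norm of a vector in `ℂⁿ`. -/
noncomputable def l1norm {n : ℕ} (v : Fin n → ℂ) : ℝ := ∑ j, ‖v j‖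

/-- Condition (A1): every kernel matrix at finitely many pairwise distinct points is
nonsingular. -/
def CondA1 {X : Type*} (K : X → X → ℂ) : Prop :=
  ∀ (n : ℕ) (x : Fin n → X), Function.Injective x → IsUnit (kernelMatrix K x).det

/-- Condition (A4): for all pairwise distinct `x₁, …, x_{n+1}`,
`‖K[x]⁻¹ K_x(x_{n+1})‖₁ ≤ 1`, where `K[x]`, `K_x` are taken at `x₁, …, xₙ`. -/
def CondA4 {X : Type*} (K : X → X → ℂ) : Prop :=
  ∀ (n : ℕ) (x : Fin (n + 1) → X), Function.Injective x →
    l1norm ((kernelMatrix K (fun i : Fin n => x i.castSucc))⁻¹ *ᵥ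
      kernelVec K (fun i : Fin n => x i.castSucc) (x (Fin.last n))) ≤ 1

/-- `Φ(c)(x) = ∑_{t ∈ X} c_t K(t, x)` for `c ∈ ℓ¹(X)`. -/
noncomputable def PhiMap {X : Type*} (K : X → X → ℂ) (c : X → ℂ) (x : X) : ℂ :=
  ∑' t, c t * K t x

/-! ### Auxiliary lemmas -/

lemma l1norm_nonneg' {n : ℕ} (v : Fin n → ℂ) : 0 ≤ l1norm v :=
  Finset.sum_nonneg fun _ _ => norm_nonneg _

lemma l1norm_continuous {n : ℕ} : Continuous (l1norm (n := n)) := by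
  apply continuous_finset_sum
  intro j _
  exact continuous_norm.comp (continuous_apply j)

lemma abs_le_l1norm {n : ℕ} (v : Fin n → ℂ) (j : Fin n) : ‖v j‖ ≤ l1norm v :=
  Finset.single_le_sum (fun i _ => norm_nonneg (v i)) (Finset.mem_univ j)

lemma l1norm_le_add {n : ℕ} (a b : Fin n → ℂ) :
    l1norm a ≤ l1norm b + l1norm (fun j => a j - b j) := by
  rw [l1norm, l1norm, l1norm, ← Finset.sum_add_distrib]
  refine Finset.sum_le_sum fun j _ => ?_
  calc ‖a j‖ = ‖b j + (a j - b j)‖ := by ring_nf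
    _ ≤ ‖b j‖ + ‖a j - b j‖ := norm_add_le _ _

lemma l1norm_mulVec_le {n : ℕ} (N : Matrix (Fin n) (Fin n) ℂ) (v : Fin n → ℂ) :
    l1norm (N *ᵥ v) ≤ (∑ j, ∑ k, ‖N j k‖) * l1norm v := by
  have hv : ∀ k, ‖v k‖ ≤ l1norm v := fun k => abs_le_l1norm v k
  calc l1norm (N *ᵥ v) = ∑ j, ‖∑ k, N j k * v k‖ := rfl
    _ ≤ ∑ j, ∑ k, ‖N j k * v k‖ :=
        Finset.sum_le_sum fun j _ => norm_sum_le _ _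
    _ ≤ ∑ j, ∑ k, ‖N j k‖ * l1norm v := by
        refine Finset.sum_le_sum fun j _ => Finset.sum_le_sum fun k _ => ?_
        rw [norm_mul]
        exact mul_le_mul_of_nonneg_left (hv k) (norm_nonneg _)
    _ = (∑ j, ∑ k, ‖N j k‖) * l1norm v := by
        rw [Finset.sum_mul]
        exact Finset.sum_congr rfl fun j _ => (Finset.sum_mul _ _ _).symm

lemma continuous_mulVec' {n : ℕ} (N : Matrix (Fin n) (Fin n) ℂ) :
    Continuous fun a : Fin n → ℂ => N *ᵥ a := by
  apply continuous_pi
  intro j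
  simp only [Matrix.mulVec, dotProduct]
  exact continuous_finset_sum _ fun k _ => continuous_const.mul (continuous_apply k)

section XLemmas
variable {X : Type*} {K : X → X → ℂ} {M : ℝ}

lemma snoc_inj {n : ℕ} {x : Fin n → X} {t : X} (hx : Function.Injective x)
    (ht : ∀ i, t ≠ x i) : Function.Injective (Fin.snoc x t : Fin (n+1) → X) := by
  intro a b hab
  induction a using Fin.lastCases with
  | last =>
    induction b using Fin.lastCases with
    | last => rfl
    | cast b =>
      rw [Fin.snoc_last, Fin.snoc_castSucc] at hab
      exact absurd hab (ht b)
  | cast a =>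
    induction b using Fin.lastCases with
    | last =>
      rw [Fin.snoc_last, Fin.snoc_castSucc] at hab
      exact absurd hab.symm (ht a)
    | cast b =>
      rw [Fin.snoc_castSucc, Fin.snoc_castSucc] at hab
      exact congrArg Fin.castSucc (hx hab)

/-- Key bound: under (A1) and (A4), `‖K[x]⁻¹ K_x(t)‖₁ ≤ 1` for every `t`. -/
lemma key_bound (hA1 : CondA1 K) (hA4 : CondA4 K) {n : ℕ} {x : Fin n → X}
    (hx : Function.Injective x) (t : X) :
    l1norm ((kernelMatrix K x)⁻¹ *ᵥ kernelVec K x t) ≤ 1 := by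
  by_cases ht : ∃ i, t = x i
  · obtain ⟨i, rfl⟩ := ht
    have hdet := hA1 n x hx
    have hvec : kernelVec K x (x i) = (kernelMatrix K x) *ᵥ Pi.single i 1 := by
      funext k
      simp [kernelVec, kernelMatrix, Matrix.mulVec_single]
    rw [hvec, Matrix.mulVec_mulVec, Matrix.nonsing_inv_mul _ hdet, Matrix.one_mulVec]
    have : l1norm (Pi.single i 1 : Fin n → ℂ) = 1 := by
      simp [l1norm, Pi.single_apply, apply_ite (fun z : ℂ => ‖z‖)]
    rw [this]
  · push_neg at ht
    have hinj : Function.Injective (Fin.snoc x t : Fin (n+1) → X) := snoc_inj hx ht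
    have h := hA4 n (Fin.snoc x t) hinj
    have hxx : (fun i : Fin n => (Fin.snoc x t : Fin (n+1) → X) i.castSucc) = x := by
      funext i; exact Fin.snoc_castSucc _ _ _
    rw [hxx, Fin.snoc_last] at h
    exact h

open scoped Classical in
/-- The function on `X` supported on the points `x i` with coefficients `a i`. -/
noncomputable def embed {n : ℕ} (x : Fin n → X) (a : Fin n → ℂ) : X → ℂ :=
  fun t => ∑ i, if t = x i then a i else 0

open scoped Classical in
lemma embed_apply {n : ℕ} {x : Fin n → X} (hx : Function.Injective x) (a : Fin n → ℂ)
    (i : Fin n) : embed x a (x i) = a i := by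
  rw [embed]
  rw [Finset.sum_eq_single i]
  · simp
  · intro j _ hj
    rw [if_neg]
    exact fun h => hj (hx h.symm)
  · simp

lemma embed_ne {n : ℕ} {x : Fin n → X} (a : Fin n → ℂ) {t : X}
    (ht : ∀ i, t ≠ x i) : embed x a t = 0 := by
  rw [embed]
  classical
  exact Finset.sum_eq_zero fun i _ => if_neg (ht i)

open scoped Classical in
lemma tsum_finsupp {n : ℕ} {x : Fin n → X} (hx : Function.Injective x)
    {E : Type*} [AddCommMonoid E] [TopologicalSpace E] [T2Space E]
    (f : X → E) (hf : ∀ t, (∀ i, t ≠ x i) → f t = 0) :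
    ∑' t, f t = ∑ i, f (x i) := by
  rw [tsum_eq_sum (s := Finset.univ.image x)
    (fun b hb => hf b fun i hi => hb (by rw [hi]; exact Finset.mem_image_of_mem x (Finset.mem_univ i)))]
  rw [Finset.sum_image (fun a _ b _ h => hx h)]

lemma summable_finsupp {n : ℕ} (x : Fin n → X) (f : X → ℝ)
    (hf : ∀ t, (∀ i, t ≠ x i) → f t = 0) : Summable f := by
  classical
  exact summable_of_ne_finset_zero (s := Finset.univ.image x)
    (fun b hb => hf b fun i hi => hb (by rw [hi]; exact Finset.mem_image_of_mem x (Finset.mem_univ i)))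

/-- For `c` supported on the range of an injective `x`, with coefficients `c (x i)`,
`Φ(c)(x j) = (K[x] *ᵥ (c ∘ x)) j`. -/
lemma phi_of_supported {n : ℕ} {x : Fin n → X} (hx : Function.Injective x)
    {c : X → ℂ} (hsupp : ∀ t, (∀ i, t ≠ x i) → c t = 0) (j : Fin n) :
    PhiMap K c (x j) = (kernelMatrix K x *ᵥ fun i => c (x i)) j := by
  rw [PhiMap, tsum_finsupp hx _ (fun t ht => by rw [hsupp t ht, zero_mul])]
  simp only [Matrix.mulVec, dotProduct, kernelMatrix, Matrix.of_apply]
  exact Finset.sum_congr rfl fun i _ => mul_comm _ _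

lemma tsum_abs_of_supported {n : ℕ} {x : Fin n → X} (hx : Function.Injective x)
    {c : X → ℂ} (hsupp : ∀ t, (∀ i, t ≠ x i) → c t = 0) :
    ∑' t, ‖c t‖ = l1norm (fun i => c (x i)) := by
  rw [tsum_finsupp hx _ (fun t ht => by rw [hsupp t ht, norm_zero])]
  rfl

lemma summable_cK (hK : ∀ s t, ‖K s t‖ ≤ M) {c : X → ℂ}
    (hc : Summable fun t => ‖c t‖) (y : X) :
    Summable fun t => c t * K t y := by
  apply Summable.of_norm
  refine Summable.of_nonneg_of_le (fun t => norm_nonneg _) (fun t => ?_) (hc.mul_right M)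
  rw [norm_mul]
  exact mul_le_mul_of_nonneg_left (hK t y) (norm_nonneg _)

/-- `(N *ᵥ (Φ(c)(x·))) j = ∑' t, c t * (N *ᵥ K_x(t)) j` for any matrix `N`. -/
lemma mulVec_phi_eq (hK : ∀ s t, ‖K s t‖ ≤ M) {n : ℕ} (x : Fin n → X)
    (N : Matrix (Fin n) (Fin n) ℂ) {c : X → ℂ}
    (hc : Summable fun t => ‖c t‖) (j : Fin n) :
    (N *ᵥ fun i => PhiMap K c (x i)) j = ∑' t, c t * (N *ᵥ kernelVec K x t) j := by
  have h1 : (N *ᵥ fun i => PhiMap K c (x i)) j = ∑ k, N j k * ∑' t, c t * K t (x k) := by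
    simp [Matrix.mulVec, dotProduct, PhiMap]
  rw [h1]
  have h2 : ∀ k ∈ Finset.univ, Summable fun t => N j k * (c t * K t (x k)) :=
    fun k _ => (summable_cK hK hc (x k)).mul_left _
  calc ∑ k, N j k * ∑' t, c t * K t (x k)
      = ∑ k, ∑' t, N j k * (c t * K t (x k)) := by
        refine Finset.sum_congr rfl fun k _ => ?_
        rw [tsum_mul_left]
    _ = ∑' t, ∑ k, N j k * (c t * K t (x k)) := (Summable.tsum_finsetSum h2).symm
    _ = ∑' t, c t * (N *ᵥ kernelVec K x t) j := by
        refine tsum_congr fun t => ?_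
        simp only [Matrix.mulVec, dotProduct, kernelVec, Finset.mul_sum]
        refine Finset.sum_congr rfl fun k _ => by ring

lemma l1norm_mulVec_phi_le (hK : ∀ s t, ‖K s t‖ ≤ M) {n : ℕ} (x : Fin n → X)
    (N : Matrix (Fin n) (Fin n) ℂ)
    (hN : ∀ t, l1norm (N *ᵥ kernelVec K x t) ≤ 1) {c : X → ℂ}
    (hc : Summable fun t => ‖c t‖) :
    l1norm (N *ᵥ fun i => PhiMap K c (x i)) ≤ ∑' t, ‖c t‖ := by
  set w : X → Fin n → ℂ := fun t => N *ᵥ kernelVec K x t with hw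
  have habs_w : ∀ t j, ‖w t j‖ ≤ 1 := fun t j =>
    le_trans (abs_le_l1norm (w t) j) (hN t)
  have hsumj : ∀ j : Fin n, Summable fun t => ‖c t * w t j‖ := by
    intro j
    apply Summable.of_nonneg_of_le (fun t => norm_nonneg _)
      (fun t => ?_) hc
    rw [norm_mul]
    calc ‖c t‖ * ‖w t j‖
        ≤ ‖c t‖ * 1 := mul_le_mul_of_nonneg_left (habs_w t j) (norm_nonneg _)
      _ = ‖c t‖ := mul_one _
  calc l1norm (N *ᵥ fun i => PhiMap K c (x i))
      = ∑ j, ‖∑' t, c t * w t j‖ := by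
        refine Finset.sum_congr rfl fun j _ => ?_
        rw [mulVec_phi_eq hK x N hc j]
    _ ≤ ∑ j, ∑' t, ‖c t * w t j‖ := by
        refine Finset.sum_le_sum fun j _ => ?_
        have := norm_tsum_le_tsum_norm (f := fun t => c t * w t j) (by
          simpa using hsumj j)
        simpa using this
    _ = ∑' t, ∑ j, ‖c t * w t j‖ := (Summable.tsum_finsetSum fun j _ => hsumj j).symm
    _ ≤ ∑' t, ‖c t‖ := by
        apply Summable.tsum_le_tsum _ _ hc
        · intro t
          calc ∑ j, ‖c t * w t j‖
              = ‖c t‖ * ∑ j, ‖w t j‖ := by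
                rw [Finset.mul_sum]; exact Finset.sum_congr rfl fun j _ => norm_mul _ _
            _ ≤ ‖c t‖ * 1 :=
                mul_le_mul_of_nonneg_left (hN t) (norm_nonneg _)
            _ = ‖c t‖ := mul_one _
        · apply Summable.of_nonneg_of_le
            (fun t => Finset.sum_nonneg fun j _ => norm_nonneg _) _ hc
          intro t
          calc ∑ j, ‖c t * w t j‖
              = ‖c t‖ * ∑ j, ‖w t j‖ := by
                rw [Finset.mul_sum]; exact Finset.sum_congr rfl fun j _ => norm_mul _ _
            _ ≤ ‖c t‖ * 1 :=
                mul_le_mul_of_nonneg_left (hN t) (norm_nonneg _)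
            _ = ‖c t‖ := mul_one _

end XLemmas

/-- Existence of a minimizer for the penalized finite-dimensional problem. -/
lemma exists_min_pen {n : ℕ} (W : (Fin n → ℂ) → ℝ) (hWc : Continuous W)
    (hW0 : ∀ v, 0 ≤ W v)
    (φ : ℝ → ℝ) (hφc : ContinuousOn φ (Set.Ici 0))
    (hφtop : Tendsto φ atTop atTop) (μ : ℝ) (hμ : 0 < μ) :
    ∃ a₀ : Fin n → ℂ, ∀ a : Fin n → ℂ,
      W a₀ + μ * φ (l1norm a₀) ≤ W a + μ * φ (l1norm a) := by
  set F : (Fin n → ℂ) → ℝ := fun a => W a + μ * φ (l1norm a) with hF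
  have hφl1 : Continuous fun a : Fin n → ℂ => φ (l1norm a) :=
    hφc.comp_continuous l1norm_continuous fun a => l1norm_nonneg' a
  have hFc : Continuous F := hWc.add (continuous_const.mul hφl1)
  obtain ⟨r₀, hr₀⟩ := (hφtop.eventually_ge_atTop (F 0 / μ + 1)).exists_forall_of_atTop
  set r := max r₀ 0 with hr
  have hrnn : (0:ℝ) ≤ r := le_max_right _ _
  set S : Set (Fin n → ℂ) := {a | l1norm a ≤ r} with hS
  have hSclosed : IsClosed S := isClosed_Iic.preimage l1norm_continuous
  have hSbdd : Bornology.IsBounded S := by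
    apply (Metric.isBounded_closedBall (x := (0 : Fin n → ℂ)) (r := r)).subset
    intro a ha
    rw [Metric.mem_closedBall, dist_zero_right]
    rw [pi_norm_le_iff_of_nonneg hrnn]
    intro j
    calc ‖a j‖ = ‖a j‖ := rfl
    _ ≤ l1norm a := abs_le_l1norm a j
    _ ≤ r := ha
  have hScpt : IsCompact S := Metric.isCompact_of_isClosed_isBounded hSclosed hSbdd
  have h0S : (0 : Fin n → ℂ) ∈ S := by
    simp only [hS, Set.mem_setOf_eq, l1norm]
    simpa using hrnn
  obtain ⟨a₀, ha₀S, ha₀min⟩ := hScpt.exists_isMinOn ⟨0, h0S⟩ hFc.continuousOn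
  refine ⟨a₀, fun a => ?_⟩
  by_cases ha : a ∈ S
  · exact ha₀min ha
  · have h1 : r ≤ l1norm a := le_of_not_ge ha
    have h2 : F 0 / μ + 1 ≤ φ (l1norm a) := hr₀ _ (le_trans (le_max_left _ _) h1)
    have h3 : F a₀ ≤ F 0 := ha₀min h0S
    have : F 0 < μ * φ (l1norm a) := by
      have h5 := mul_le_mul_of_nonneg_left h2 hμ.le
      have h6 : μ * (F 0 / μ + 1) = F 0 + μ := by field_simp
      rw [h6] at h5
      linarith
    have h4 : F 0 ≤ F a := by
      have := hW0 a
      simp only [hF] at *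
      nlinarith
    exact le_trans h3 h4

theorem stmt_9 {X : Type*} (K : X → X → ℂ) (M : ℝ)
    (hK : ∀ s t, ‖K s t‖ ≤ M) (hA1 : CondA1 K) :
    CondA4 K ↔
      ∀ (n : ℕ) (x : Fin n → X), Function.Injective x →
        ∀ V : (Fin n → ℂ) → ℝ, Continuous V → (∀ v, 0 ≤ V v) →
        ∀ φ : ℝ → ℝ, ContinuousOn φ (Set.Ici 0) → MonotoneOn φ (Set.Ici 0) →
          (∀ t ∈ Set.Ici (0 : ℝ), 0 ≤ φ t) → Tendsto φ atTop atTop →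
        ∀ μ : ℝ, 0 < μ →
        ∃ c₀ : X → ℂ, Summable (fun t => ‖c₀ t‖) ∧
          (∀ t, c₀ t ≠ 0 → ∃ i, t = x i) ∧
          ∀ c : X → ℂ, Summable (fun t => ‖c t‖) →
            V (fun i => PhiMap K c₀ (x i)) + μ * φ (∑' t, ‖c₀ t‖) ≤
              V (fun i => PhiMap K c (x i)) + μ * φ (∑' t, ‖c t‖) := by
  constructor
  · -- (A4) → representer theorem
    intro hA4 n x hx V hVc hV0 φ hφc hφm hφ0 hφtop μ hμ
    set Mx := kernelMatrix K x with hMx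
    have hdet := hA1 n x hx
    obtain ⟨a₀, ha₀⟩ := exists_min_pen (fun a => V (Mx *ᵥ a))
      (hVc.comp (continuous_mulVec' Mx)) (fun a => hV0 _) φ hφc hφtop μ hμ
    refine ⟨embed x a₀, ?_, ?_, ?_⟩
    · exact summable_finsupp x _ fun t ht => by rw [embed_ne _ ht, norm_zero]
    · intro t ht
      by_contra hcon
      push_neg at hcon
      exact ht (embed_ne _ hcon)
    · intro c hc
      have hsupp0 : ∀ t, (∀ i, t ≠ x i) → embed x a₀ t = 0 := fun t ht => embed_ne _ ht
      have hb : (fun i => embed x a₀ (x i)) = a₀ := funext fun i => embed_apply hx a₀ i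
      have h1 : (fun i => PhiMap K (embed x a₀) (x i)) = Mx *ᵥ a₀ := by
        funext j
        rw [phi_of_supported hx hsupp0 j, hb]
      have h2 : ∑' t, ‖embed x a₀ t‖ = l1norm a₀ := by
        rw [tsum_abs_of_supported hx hsupp0, hb]
      set y : Fin n → ℂ := fun i => PhiMap K c (x i) with hy
      set a : Fin n → ℂ := Mx⁻¹ *ᵥ y with ha
      have h3 : Mx *ᵥ a = y := by
        rw [ha, Matrix.mulVec_mulVec, Matrix.mul_nonsing_inv _ hdet, Matrix.one_mulVec]
      have h4 : l1norm a ≤ ∑' t, ‖c t‖ :=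
        l1norm_mulVec_phi_le hK x Mx⁻¹ (fun t => key_bound hA1 hA4 hx t) hc
      have h5 : μ * φ (l1norm a) ≤ μ * φ (∑' t, ‖c t‖) := by
        apply mul_le_mul_of_nonneg_left _ hμ.le
        exact hφm (Set.mem_Ici.2 (l1norm_nonneg' a))
          (Set.mem_Ici.2 (le_trans (l1norm_nonneg' a) h4)) h4
      calc V (fun i => PhiMap K (embed x a₀) (x i)) + μ * φ (∑' t, ‖embed x a₀ t‖)
          = V (Mx *ᵥ a₀) + μ * φ (l1norm a₀) := by rw [h1, h2]
        _ ≤ V (Mx *ᵥ a) + μ * φ (l1norm a) := ha₀ a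
        _ = V y + μ * φ (l1norm a) := by rw [h3]
        _ ≤ V (fun i => PhiMap K c (x i)) + μ * φ (∑' t, ‖c t‖) := by
            rw [hy]; linarith
  · -- representer theorem → (A4)
    intro h n x hx
    set x' : Fin n → X := fun i => x i.castSucc with hx'def
    have hx' : Function.Injective x' := fun i j hij => Fin.castSucc_injective n (hx hij)
    have hdet := hA1 n x' hx'
    set Mx := kernelMatrix K x' with hMx
    set y := kernelVec K x' (x (Fin.last n)) with hy
    set a : Fin n → ℂ := Mx⁻¹ *ᵥ y with ha
    show l1norm a ≤ 1
    by_contra hcon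
    push_neg at hcon
    set ε := l1norm a - 1 with hε
    have hεpos : 0 < ε := by simp only [hε]; linarith
    set C := (∑ j, ∑ k, ‖Mx⁻¹ j k‖) + 1 with hC
    have hCpos : 0 < C := by
      have : 0 ≤ ∑ j, ∑ k, ‖Mx⁻¹ j k‖ :=
        Finset.sum_nonneg fun j _ => Finset.sum_nonneg fun k _ => norm_nonneg _
      simp only [hC]; linarith
    have hCbound : ∀ v, l1norm (Mx⁻¹ *ᵥ v) ≤ C * l1norm v := by
      intro v
      refine le_trans (l1norm_mulVec_le _ v) ?_
      apply mul_le_mul_of_nonneg_right _ (l1norm_nonneg' v)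
      simp only [hC]; linarith
    set R := 4 * C / ε with hR
    have hRpos : 0 < R := by
      rw [hR]
      exact div_pos (by linarith) hεpos
    set V : (Fin n → ℂ) → ℝ := fun v => R * l1norm (fun j => v j - y j) with hV
    have hVc : Continuous V := by
      apply continuous_const.mul
      exact l1norm_continuous.comp
        (continuous_pi fun j => (continuous_apply j).sub continuous_const)
    have hV0 : ∀ v, 0 ≤ V v := fun v => mul_nonneg hRpos.le (l1norm_nonneg' _)
    obtain ⟨c₀, hc₀sum, hc₀supp, hmin⟩ := h n x' hx' V hVc hV0 id continuous_id.continuousOn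
      monotoneOn_id (fun t ht => ht) tendsto_id 1 one_pos
    -- the competitor: delta at x (Fin.last n)
    set u : Fin 1 → X := fun _ => x (Fin.last n) with hu
    have hu_inj : Function.Injective u := fun i j _ => Subsingleton.elim i j
    have hcsupp : ∀ t, (∀ i : Fin 1, t ≠ u i) → embed u (fun _ => (1:ℂ)) t = 0 :=
      fun t ht => embed_ne _ ht
    have hcsum : Summable fun t => ‖embed u (fun _ => (1:ℂ)) t‖ :=
      summable_finsupp u _ fun t ht => by rw [embed_ne _ ht, norm_zero]
    have hPhic : (fun i => PhiMap K (embed u fun _ => (1:ℂ)) (x' i)) = y := by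
      funext i
      rw [PhiMap, tsum_finsupp hu_inj _ (fun t ht => by rw [hcsupp t ht, zero_mul])]
      simp only [Fin.sum_univ_one]
      rw [embed_apply hu_inj (fun _ => (1:ℂ)) 0, one_mul]
      rfl
    have hcnorm : ∑' t, ‖embed u (fun _ => (1:ℂ)) t‖ = 1 := by
      rw [tsum_abs_of_supported hu_inj hcsupp]
      simp only [l1norm, Fin.sum_univ_one]
      rw [embed_apply hu_inj (fun _ => (1:ℂ)) 0]
      simp
    -- properties of the minimizer c₀
    set b : Fin n → ℂ := fun i => c₀ (x' i) with hb
    have hsupp₀ : ∀ t, (∀ i, t ≠ x' i) → c₀ t = 0 := by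
      intro t ht
      by_contra h0
      obtain ⟨i, hi⟩ := hc₀supp t h0
      exact ht i hi
    have hPhic₀ : (fun i => PhiMap K c₀ (x' i)) = Mx *ᵥ b :=
      funext fun j => phi_of_supported hx' hsupp₀ j
    have hnorm₀ : ∑' t, ‖c₀ t‖ = l1norm b := tsum_abs_of_supported hx' hsupp₀
    have hspec := hmin (embed u fun _ => (1:ℂ)) hcsum
    rw [hPhic, hPhic₀, hcnorm, hnorm₀] at hspec
    simp only [hV, id_eq, one_mul] at hspec
    have hyy : l1norm (fun j => y j - y j) = 0 := by
      simp [l1norm]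
    rw [hyy, mul_zero, zero_add] at hspec
    -- hspec : R * l1norm (fun j => (Mx *ᵥ b) j - y j) + l1norm b ≤ 1
    set D := l1norm (fun j => (Mx *ᵥ b) j - y j) with hD
    have hDnn : 0 ≤ D := l1norm_nonneg' _
    have hab : l1norm (fun j => a j - b j) ≤ C * D := by
      have heq : (fun j => a j - b j) = Mx⁻¹ *ᵥ (y - Mx *ᵥ b) := by
        rw [Matrix.mulVec_sub, Matrix.mulVec_mulVec, Matrix.nonsing_inv_mul _ hdet,
          Matrix.one_mulVec, ← ha]
        funext j
        simp [Pi.sub_apply]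
      rw [heq]
      refine le_trans (hCbound _) ?_
      apply mul_le_mul_of_nonneg_left _ hCpos.le
      rw [hD, l1norm, l1norm]
      refine le_of_eq (Finset.sum_congr rfl fun j _ => ?_)
      rw [Pi.sub_apply, norm_sub_rev]
    have htri : l1norm a ≤ l1norm b + l1norm (fun j => a j - b j) := l1norm_le_add a b
    clear_value D
    clear_value R
    clear_value C
    clear_value ε
    rcases le_or_gt (ε / (2 * C)) D with hDc | hDc
    · have h6 : R * (ε / (2 * C)) ≤ R * D := mul_le_mul_of_nonneg_left hDc hRpos.le
      have h7 : R * (ε / (2 * C)) = 2 := by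
        rw [hR]; field_simp; ring
      have h8 : 0 ≤ l1norm b := l1norm_nonneg' b
      linarith
    · have h6 : C * D ≤ ε / 2 := by
        have := mul_le_mul_of_nonneg_left hDc.le hCpos.le
        have h7 : C * (ε / (2 * C)) = ε / 2 := by field_simp
        linarith
      have h8 : 0 ≤ R * D := mul_nonneg hRpos.le hDnn
      -- l1norm a = 1 + ε, l1norm b ≤ 1, l1norm (a-b) ≤ ε/2
      have h9 : l1norm a = 1 + ε := by rw [hε]; ring
      have hb1 : l1norm b ≤ 1 := by linarith
      have h10 : l1norm a ≤ l1norm b + C * D := by linarith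
      have h11 : l1norm a ≤ 1 + ε / 2 := by linarith
      linarith
end

section
/- Let K(s,t) := e^{−|s−t|} for s, t ∈ ℝ (the exponential kernel). For every n ≥ 1, all pairwise distinct x₁, …, xₙ ∈ ℝ, and every t ∈ ℝ, one has ‖(K[x])^{-1} K_x(t)‖₁ ≤ 1; that is, K satisfies condition (A4). -/
open Matrix

noncomputable def expMatrix {n : ℕ} (x : Fin n → ℝ) : Matrix (Fin n) (Fin n) ℝ :=
  Matrix.of fun j k => Real.exp (-|x k - x j|)

noncomputable def expVec {n : ℕ} (x : Fin n → ℝ) (t : ℝ) : Fin n → ℝ :=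
  fun j => Real.exp (-|t - x j|)

lemma key_lemma {n : ℕ} (x : Fin n → ℝ) (t : ℝ) (c : Fin n → ℝ)
    (hc : expMatrix x *ᵥ c = expVec x t) (hsum : ∑ j, |c j| ≤ 1) :
    ∑ j, |((expMatrix x)⁻¹ *ᵥ expVec x t) j| ≤ 1 := by
  by_cases h : IsUnit (expMatrix x).det
  · rw [← hc, Matrix.mulVec_mulVec, Matrix.nonsing_inv_mul _ h, Matrix.one_mulVec]
    exact hsum
  · rw [Matrix.nonsing_inv_apply_not_isUnit _ h, Matrix.zero_mulVec]
    simp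

lemma sum_abs_single {n : ℕ} (p : Fin n) (a : ℝ) :
    ∑ j, |Pi.single p a j| = |a| := by
  rw [Finset.sum_eq_single p]
  · simp
  · intro b _ hb; simp [Pi.single_apply, hb]
  · simp

theorem stmt_17 (n : ℕ) (hn : 1 ≤ n) (x : Fin n → ℝ)
    (hinj : Function.Injective x) (t : ℝ) :
    ∑ j, |((expMatrix x)⁻¹ *ᵥ expVec x t) j| ≤ 1 := by
  by_cases hex : ∃ k, x k = t
  · obtain ⟨k, hk⟩ := hex
    apply key_lemma x t (Pi.single k 1)
    · funext j
      simp [expMatrix, expVec, hk]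
    · rw [sum_abs_single]; simp
  push_neg at hex
  by_cases hlo : ∃ j, x j < t
  · by_cases hhi : ∃ j, t < x j
    · -- t strictly between two points
      obtain ⟨p, hpmem, hp⟩ := Finset.exists_max_image
        (Finset.univ.filter fun j => x j < t) x (by obtain ⟨j, hj⟩ := hlo; exact ⟨j, by simp [hj]⟩)
      obtain ⟨q, hqmem, hq⟩ := Finset.exists_min_image
        (Finset.univ.filter fun j => t < x j) x (by obtain ⟨j, hj⟩ := hhi; exact ⟨j, by simp [hj]⟩)
      simp only [Finset.mem_filter, Finset.mem_univ, true_and] at hpmem hqmem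
      have hple : ∀ j, x j < t → x j ≤ x p := fun j hj => hp j (by simp [hj])
      have hqle : ∀ j, t < x j → x q ≤ x j := fun j hj => hq j (by simp [hj])
      set U := Real.exp (x p) with hU
      set V := Real.exp (x q) with hV
      set S := Real.exp t with hS
      have hUS : U < S := Real.exp_lt_exp.2 hpmem
      have hSV : S < V := Real.exp_lt_exp.2 hqmem
      have hU0 : 0 < U := Real.exp_pos _
      have hS0 : 0 < S := Real.exp_pos _
      have hV0 : 0 < V := Real.exp_pos _
      have hUV : U < V := hUS.trans hSV
      have hVU2 : 0 < V ^ 2 - U ^ 2 := by nlinarith [mul_pos (sub_pos.2 hUV) (show (0:ℝ) < V + U by linarith)]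
      have hVS2 : 0 ≤ V ^ 2 - S ^ 2 := by nlinarith [mul_pos (sub_pos.2 hSV) (show (0:ℝ) < V + S by linarith)]
      have hSU2 : 0 ≤ S ^ 2 - U ^ 2 := by nlinarith [mul_pos (sub_pos.2 hUS) (show (0:ℝ) < S + U by linarith)]
      have hden : 0 < S * (V ^ 2 - U ^ 2) := mul_pos hS0 hVU2
      set a := U * (V ^ 2 - S ^ 2) / (S * (V ^ 2 - U ^ 2)) with ha
      set b := V * (S ^ 2 - U ^ 2) / (S * (V ^ 2 - U ^ 2)) with hb
      have ha0 : 0 ≤ a := div_nonneg (mul_nonneg hU0.le hVS2) hden.le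
      have hb0 : 0 ≤ b := div_nonneg (mul_nonneg hV0.le hSU2) hden.le
      have hab : a + b ≤ 1 := by
        rw [ha, hb, ← add_div, div_le_one hden]
        nlinarith [mul_nonneg (mul_nonneg (show (0:ℝ) ≤ S - U by linarith)
          (show (0:ℝ) ≤ V - S by linarith)) (show (0:ℝ) ≤ U + V by linarith)]
      apply key_lemma x t (Pi.single p a + Pi.single q b)
      · funext j
        have hMa : (expMatrix x *ᵥ (Pi.single p a + Pi.single q b)) j
            = expMatrix x j p * a + expMatrix x j q * b := by
          rw [Matrix.mulVec_add]; simp; ring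
        rw [hMa]
        simp only [expMatrix, expVec, Matrix.of_apply]
        rcases lt_or_gt_of_ne (hex j) with hj | hj
        · have h1 : |x p - x j| = x p - x j := abs_of_nonneg (by linarith [hple j hj])
          have h2 : |x q - x j| = x q - x j := abs_of_nonneg (by linarith [hple j hj, hpmem, hqmem])
          have h3 : |t - x j| = t - x j := abs_of_nonneg (by linarith)
          rw [h1, h2, h3, neg_sub, neg_sub, neg_sub, Real.exp_sub, Real.exp_sub, Real.exp_sub,
            ← hU, ← hV, ← hS, ha, hb]
          field_simp
          ring
        · have h1 : |x p - x j| = x j - x p := by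
            rw [abs_sub_comm]; exact abs_of_nonneg (by linarith [hqle j hj])
          have h2 : |x q - x j| = x j - x q := by
            rw [abs_sub_comm]; exact abs_of_nonneg (by linarith [hqle j hj])
          have h3 : |t - x j| = x j - t := by
            rw [abs_sub_comm]; exact abs_of_nonneg (by linarith)
          rw [h1, h2, h3, neg_sub, neg_sub, neg_sub, Real.exp_sub, Real.exp_sub, Real.exp_sub,
            ← hU, ← hV, ← hS, ha, hb]
          field_simp
          ring
      · calc ∑ j, |((Pi.single p a + Pi.single q b : Fin n → ℝ)) j|
            ≤ ∑ j, (|Pi.single p a j| + |Pi.single q b j|) :=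
              Finset.sum_le_sum fun j _ => abs_add_le _ _
          _ = |a| + |b| := by rw [Finset.sum_add_distrib, sum_abs_single, sum_abs_single]
          _ ≤ 1 := by rw [abs_of_nonneg ha0, abs_of_nonneg hb0]; exact hab
    · -- all points below t
      push_neg at hhi
      obtain ⟨p, hpmem, hp⟩ := Finset.exists_max_image
        (Finset.univ.filter fun j => x j < t) x (by obtain ⟨j, hj⟩ := hlo; exact ⟨j, by simp [hj]⟩)
      simp only [Finset.mem_filter, Finset.mem_univ, true_and] at hpmem
      have hple : ∀ j, x j ≤ x p := fun j => hp j (by simp [lt_of_le_of_ne (hhi j) (hex j)])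
      apply key_lemma x t (Pi.single p (Real.exp (x p - t)))
      · funext j
        simp only [Matrix.mulVec_single, Pi.smul_apply, op_smul_eq_mul, Matrix.col_apply, expMatrix, expVec, Matrix.of_apply]
        have h1 : |x p - x j| = x p - x j := abs_of_nonneg (by linarith [hple j])
        have h3 : |t - x j| = t - x j := abs_of_nonneg (by linarith [lt_of_le_of_ne (hhi j) (hex j)])
        rw [h1, h3, ← Real.exp_add]
        ring_nf
      · rw [sum_abs_single, abs_of_nonneg (Real.exp_pos _).le]
        exact Real.exp_le_one_iff.mpr (by linarith)
  · -- all points above t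
    push_neg at hlo
    have hlt : ∀ j, t < x j := fun j => lt_of_le_of_ne (hlo j) (Ne.symm (hex j))
    obtain ⟨q, hqmem, hq⟩ := Finset.exists_min_image
      (Finset.univ.filter fun j => t < x j) x ⟨⟨0, hn⟩, by simp [hlt]⟩
    simp only [Finset.mem_filter, Finset.mem_univ, true_and] at hqmem
    have hqle : ∀ j, x q ≤ x j := fun j => hq j (by simp [hlt j])
    apply key_lemma x t (Pi.single q (Real.exp (t - x q)))
    · funext j
      simp only [Matrix.mulVec_single, Pi.smul_apply, op_smul_eq_mul, Matrix.col_apply, expMatrix, expVec, Matrix.of_apply]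
      have h1 : |x q - x j| = x j - x q := by
        rw [abs_sub_comm]; exact abs_of_nonneg (by linarith [hqle j])
      have h3 : |t - x j| = x j - t := by
        rw [abs_sub_comm]; exact abs_of_nonneg (by linarith [hlt j])
      rw [h1, h3, ← Real.exp_add]
      ring_nf
    · rw [sum_abs_single, abs_of_nonneg (Real.exp_pos _).le]
      exact Real.exp_le_one_iff.mpr (by linarith [hqmem])
end
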